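/- Let E be a directed graph. Let X_0 be the set of vertices v ∈ E^0 for which there exist two distinct edges e ≠ f with s(e) = s(f) = v and such that there are paths from r(e) to v and from r(f) to v. Let X be the smallest hereditary and saturated subset of E^0 containing X_0. Then the restriction of E to E^0 \ X has isolated loops. -/

import Mathlib

open Classical

variable {V : Type*} {E : Type*}

/-- Reflexive-transitive reachability along edges of a directed graph `(V, E, src, rng)`. -/
def Reach (src rng : E → V) : V → V → Prop :=
  Relation.ReflTransGen (fun a b => ∃ e, src e = a ∧ rng e = b)

/-- A loop in a directed graph: a nonempty list of edges, cyclically composable. -/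
def IsLoop (src rng : E → V) (p : List E) : Prop :=
  p ≠ [] ∧ ∀ i : Fin p.length,
    rng (p.get i) = src (p.get ⟨((i : ℕ) + 1) % p.length, Nat.mod_lt _ i.pos⟩)

/-- A loop is vertex-simple if the sources of its edges are pairwise distinct. -/
def VertexSimple (src : E → V) (p : List E) : Prop :=
  ∀ i j : Fin p.length, i ≠ j → src (p.get i) ≠ src (p.get j)

/-- A graph has isolated loops if any two loops passing through a common vertex
share the edge at that vertex. -/
def HasIsolatedLoops (src rng : E → V) : Prop :=
  ∀ p q : List E, IsLoop src rng p → IsLoop src rng q →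
    ∀ (i : Fin p.length) (j : Fin q.length),
      src (p.get i) = src (q.get j) → p.get i = q.get j

/-- An infinite path: a sequence of composable edges. -/
def IsInfPath (src rng : E → V) (b : ℕ → E) : Prop :=
  ∀ i, rng (b i) = src (b (i + 1))

/-- Shift-tail equivalence of infinite paths. -/
def ShiftTailEquiv (b c : ℕ → E) : Prop :=
  ∃ k m : ℕ, ∀ i : ℕ, b (k + i) = c (m + i)

/-- A maximal tail: nonempty, and satisfying (MT1), (MT2), (MT3). -/
def MaximalTail (src rng : E → V) (M : Set V) : Prop :=
  M.Nonempty ∧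
  (∀ v w, w ∈ M → Reach src rng v w → v ∈ M) ∧
  (∀ v ∈ M, {e | src e = v}.Finite → {e | src e = v}.Nonempty →
    ∃ e, src e = v ∧ rng e ∈ M) ∧
  (∀ v ∈ M, ∀ w ∈ M, ∃ y ∈ M, Reach src rng v y ∧ Reach src rng w y)

/-- A hereditary set of vertices. -/
def Hereditary (src rng : E → V) (X : Set V) : Prop :=
  ∀ e, src e ∈ X → rng e ∈ X

/-- A saturated set of vertices. -/
def Saturated (src rng : E → V) (X : Set V) : Prop :=
  ∀ v, {e | src e = v}.Finite → {e | src e = v}.Nonempty →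
    (∀ e, src e = v → rng e ∈ X) → v ∈ X

/-- `LoopGE p q`: there is a path from a vertex of loop `p` to a vertex of loop `q`. -/
def LoopGE (src rng : E → V) (p q : List E) : Prop :=
  ∃ (i : Fin p.length) (j : Fin q.length),
    Reach src rng (src (p.get i)) (src (q.get j))

/-- The set `X₀` of vertices at which two distinct loops are based. -/
def X0set (src rng : E → V) : Set V :=
  {v | ∃ e f : E, e ≠ f ∧ src e = v ∧ src f = v ∧
    Reach src rng (rng e) v ∧ Reach src rng (rng f) v}


lemma reach_loop {V E : Type*} (src rng : E → V) (p : List E) (hp : IsLoop src rng p)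
    (j : ℕ) (hj : j < p.length) :
    ∀ t, Reach src rng (src (p.get ⟨j, hj⟩))
      (src (p.get ⟨(j + t) % p.length, Nat.mod_lt _ (Nat.pos_of_ne_zero (fun h => by omega))⟩)) := by
  intro t
  induction t with
  | zero =>
    have h : (⟨(j + 0) % p.length, Nat.mod_lt _ (Nat.pos_of_ne_zero (fun h => by omega))⟩ : Fin p.length) = ⟨j, hj⟩ := by
      ext; simp [Nat.mod_eq_of_lt hj]
    rw [h]
    exact Relation.ReflTransGen.refl
  | succ t ih =>
    refine ih.tail ?_
    refine ⟨p.get ⟨(j + t) % p.length, Nat.mod_lt _ (Nat.pos_of_ne_zero (fun h => by omega))⟩, rfl, ?_⟩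
    have h2 := hp.2 ⟨(j + t) % p.length, Nat.mod_lt _ (Nat.pos_of_ne_zero (fun h => by omega))⟩
    rw [h2]
    exact congrArg src (congrArg p.get (Fin.ext (by
      show ((j + t) % p.length + 1) % p.length = (j + (t + 1)) % p.length
      rw [Nat.mod_add_mod, Nat.add_assoc])))

lemma reach_loop_back {V E : Type*} (src rng : E → V) (p : List E) (hp : IsLoop src rng p)
    (i : Fin p.length) : Reach src rng (rng (p.get i)) (src (p.get i)) := by
  have hn : 0 < p.length := i.pos
  have h1 := reach_loop src rng p hp (((i : ℕ) + 1) % p.length) (Nat.mod_lt _ hn)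
    (p.length - 1)
  have he : ((((i : ℕ) + 1) % p.length) + (p.length - 1)) % p.length = (i : ℕ) := by
    rw [Nat.mod_add_mod]
    have : (i : ℕ) + 1 + (p.length - 1) = (i : ℕ) + p.length := by omega
    rw [this, Nat.add_mod_right, Nat.mod_eq_of_lt i.isLt]
  have hfin : (⟨((((i : ℕ) + 1) % p.length) + (p.length - 1)) % p.length,
      Nat.mod_lt _ (Nat.pos_of_ne_zero (fun h => by omega))⟩ : Fin p.length) = i := by
    ext; exact he
  rw [hfin] at h1
  rw [hp.2 i]
  exact h1

/-- If `X` is the smallest hereditary and saturated set containing `X₀`, then the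
restriction of `E` to `E⁰ \ X` has isolated loops. -/
theorem stmt_11 (src rng : E → V) (X : Set V)
    (hher : Hereditary src rng X) (hsat : Saturated src rng X)
    (hX0 : X0set src rng ⊆ X)
    (hmin : ∀ Y : Set V, Hereditary src rng Y → Saturated src rng Y →
      X0set src rng ⊆ Y → X ⊆ Y) :
    HasIsolatedLoops (E := {e : E // src e ∉ X ∧ rng e ∉ X})
      (fun e => src e.1) (fun e => rng e.1) := by
  intro p q hp hq i j hsame
  by_contra hne
  have hmono : ∀ a b, Reach (fun e : {e : E // src e ∉ X ∧ rng e ∉ X} => src e.1)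
      (fun e => rng e.1) a b → Reach src rng a b := by
    intro a b hab
    refine Relation.ReflTransGen.mono ?_ _ _ hab
    rintro x y ⟨e, h1, h2⟩
    exact ⟨e.1, h1, h2⟩
  have hr1 := hmono _ _ (reach_loop_back _ _ p hp i)
  have hr2 := hmono _ _ (reach_loop_back _ _ q hq j)
  have hv : src (p.get i).1 ∈ X0set src rng := by
    refine ⟨(p.get i).1, (q.get j).1, ?_, rfl, hsame.symm, hr1, ?_⟩
    · intro h
      exact hne (Subtype.ext h)
    · have hsame' : src (p.get i).1 = src (q.get j).1 := hsame
      rw [hsame']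
      exact hr2
  exact (p.get i).2.1 (hX0 hv)
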